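/- If G is continuously differentiable with 0 < G′(v) ≤ κ for all v, then m is (C·κ)-Lipschitz on [0, ∞): for all μ₁, μ₂ ≥ 0, |m(μ₂) − m(μ₁)| ≤ C·κ·|μ₂ − μ₁|. -/

import Mathlib

open Set

/-- If `G` is continuously differentiable with `0 < G′(v) ≤ κ` for all `v`,
then the equilibrium map `m` is `(C·κ)`-Lipschitz on `[0, ∞)`. -/
theorem equilibrium_map_lipschitz
    (G G' : ℝ → ℝ) (κ : ℝ)
    (hG_deriv : ∀ v, HasDerivAt G (G' v) v)
    (hG'_cont : Continuous G')
    (hG'_pos : ∀ v, 0 < G' v)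
    (hG'_le : ∀ v, G' v ≤ κ)
    (Ginv : ℝ → ℝ)
    (hGinv : ∀ u, Ginv u = sSup {t | G t ≤ u})
    (hGinv_mono : MonotoneOn Ginv (Icc 0 1))
    (hGinv_nonneg : ∀ u ∈ Icc (0:ℝ) 1, 0 ≤ Ginv u)
    (hGinv_one : 0 < Ginv 1)
    (c1 c2 : ℝ → ℝ) (C : ℝ) (hC : 0 < C)
    (hc1_cont : ContinuousOn c1 (Icc 0 1))
    (hc1_anti : StrictAntiOn c1 (Icc 0 1))
    (hc1_one : c1 1 = 0)
    (hc1_nonneg : ∀ u ∈ Icc (0:ℝ) 1, 0 ≤ c1 u)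
    (hc1_bdd : ∀ u ∈ Icc (0:ℝ) 1, c1 u ≤ C)
    (hc2_cont : ContinuousOn c2 (Icc 0 1))
    (hc2_anti : AntitoneOn c2 (Icc 0 1))
    (hc2_one : c2 1 = 0)
    (m : ℝ → ℝ)
    (hm : ∀ μ, m μ = sInf {u | u ∈ Icc (0:ℝ) 1 ∧ c1 u * μ + c2 u ≤ Ginv u}) :
    ∀ μ₁ ∈ Ici (0:ℝ), ∀ μ₂ ∈ Ici (0:ℝ), |m μ₂ - m μ₁| ≤ C * κ * |μ₂ - μ₁| := by
  have hκ : 0 < κ := lt_of_lt_of_le (hG'_pos 0) (hG'_le 0)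
  have hdiff : Differentiable ℝ G := fun v => (hG_deriv v).differentiableAt
  have hGcont : Continuous G := hdiff.continuous
  have hGmono : StrictMono G :=
    strictMono_of_deriv_pos (fun v => by rw [(hG_deriv v).deriv]; exact hG'_pos v)
  -- G grows at rate at most κ
  have hFmono : Monotone (fun t => κ * t - G t) := by
    have hF : ∀ t, HasDerivAt (fun t => κ * t - G t) (κ - G' t) t := by
      intro t
      have h := ((hasDerivAt_id t).const_mul κ).sub (hG_deriv t)
      rw [mul_one] at h
      exact h
    exact monotone_of_deriv_nonneg (fun t => (hF t).differentiableAt)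
      (fun t => by rw [(hF t).deriv]; linarith [hG'_le t])
  have hGlip : ∀ x y : ℝ, x ≤ y → G y ≤ G x + κ * (y - x) := by
    intro x y hxy
    have := hFmono hxy
    simp only at this
    linarith
  -- the level set at 1 is nonempty and bounded above
  have hT1ne : {t | G t ≤ (1:ℝ)}.Nonempty := by
    by_contra h
    rw [Set.not_nonempty_iff_eq_empty] at h
    rw [hGinv 1, h, Real.sSup_empty] at hGinv_one
    exact lt_irrefl 0 hGinv_one
  have hT1bdd : BddAbove {t | G t ≤ (1:ℝ)} := by
    by_contra h
    rw [hGinv 1, Real.sSup_of_not_bddAbove h] at hGinv_one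
    exact lt_irrefl 0 hGinv_one
  have hclosed : ∀ u : ℝ, IsClosed {t | G t ≤ u} :=
    fun u => isClosed_le hGcont continuous_const
  -- G 0 ≤ 0 is forced by nonnegativity of Ginv
  have hG0 : G 0 ≤ 0 := by
    by_contra h
    push_neg at h
    obtain ⟨t₁, ht₁⟩ := hT1ne
    set t₂ := min t₁ 0 - 1 with ht₂def
    have ht₂lt0 : t₂ < 0 := by
      have : min t₁ 0 ≤ 0 := min_le_right _ _
      simp only [ht₂def]; linarith
    have ht₂lt1 : t₂ ≤ t₁ := by
      have : min t₁ 0 ≤ t₁ := min_le_left _ _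
      simp only [ht₂def]; linarith
    have hGt₂ : G t₂ < G 0 := hGmono ht₂lt0
    have hGt₂1 : G t₂ ≤ 1 := le_trans (hGmono.monotone ht₂lt1) ht₁
    set u := max (G t₂) 0 with hudef
    have hu01 : u ∈ Icc (0:ℝ) 1 := ⟨le_max_right _ _, max_le hGt₂1 zero_le_one⟩
    have huG0 : u < G 0 := max_lt hGt₂ h
    have hne : {t | G t ≤ u}.Nonempty := ⟨t₂, show G t₂ ≤ u from le_max_left _ _⟩
    have hbdd : BddAbove {t | G t ≤ u} :=
      hT1bdd.mono (fun t ht => le_trans ht hu01.2)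
    have hmem : sSup {t | G t ≤ u} ∈ {t | G t ≤ u} :=
      (hclosed u).csSup_mem hne hbdd
    have hneg : sSup {t | G t ≤ u} < 0 := by
      by_contra hge
      push_neg at hge
      have : G 0 ≤ G (sSup {t | G t ≤ u}) := hGmono.monotone hge
      exact absurd (lt_of_le_of_lt (le_trans this hmem) huG0) (lt_irrefl _)
    have := hGinv_nonneg u hu01
    rw [hGinv u] at this
    linarith
  -- for u ∈ [0,1] the level set is nonempty and bounded, and Ginv u is in it
  have hne : ∀ u : ℝ, 0 ≤ u → {t | G t ≤ u}.Nonempty :=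
    fun u hu => ⟨0, le_trans hG0 hu⟩
  have hbdd : ∀ u : ℝ, u ≤ 1 → BddAbove {t | G t ≤ u} :=
    fun u hu => hT1bdd.mono (fun t ht => le_trans ht hu)
  have hGGinv : ∀ u : ℝ, 0 ≤ u → u ≤ 1 → G (Ginv u) ≤ u := by
    intro u hu0 hu1
    rw [hGinv u]
    exact (hclosed u).csSup_mem (hne u hu0) (hbdd u hu1)
  -- key growth lemma : Ginv grows at rate at least 1/κ
  have hgrowth : ∀ a b : ℝ, 0 ≤ a → a ≤ b → b ≤ 1 → Ginv a + (b - a) / κ ≤ Ginv b := by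
    intro a b ha0 hab hb1
    have hstep : (0:ℝ) ≤ (b - a) / κ := div_nonneg (by linarith) hκ.le
    have h1 : G (Ginv a + (b - a) / κ) ≤ b := by
      have h2 := hGlip (Ginv a) (Ginv a + (b - a) / κ) (by linarith)
      have h3 : κ * (Ginv a + (b - a) / κ - Ginv a) = b - a := by
        field_simp
        ring
      rw [h3] at h2
      have h4 := hGGinv a ha0 (le_trans hab hb1)
      linarith
    rw [hGinv b]
    exact le_csSup (hbdd b hb1) h1
  -- the equilibrium sets
  set E : ℝ → Set ℝ := fun μ => {u | u ∈ Icc (0:ℝ) 1 ∧ c1 u * μ + c2 u ≤ Ginv u} with hE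
  have hmE : ∀ μ, m μ = sInf (E μ) := hm
  have hE1 : ∀ μ : ℝ, 0 ≤ μ → (1:ℝ) ∈ E μ := by
    intro μ hμ
    refine ⟨⟨zero_le_one, le_refl 1⟩, ?_⟩
    rw [hc1_one, hc2_one]
    simpa using hGinv_one.le
  have hEne : ∀ μ : ℝ, 0 ≤ μ → (E μ).Nonempty := fun μ hμ => ⟨1, hE1 μ hμ⟩
  have hEbdd : ∀ μ : ℝ, BddBelow (E μ) := fun μ => ⟨0, fun u hu => hu.1.1⟩
  have hm0 : ∀ μ : ℝ, 0 ≤ μ → 0 ≤ m μ := by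
    intro μ hμ
    rw [hmE μ]
    exact le_csInf (hEne μ hμ) (fun u hu => hu.1.1)
  have hm1 : ∀ μ : ℝ, 0 ≤ μ → m μ ≤ 1 := by
    intro μ hμ
    rw [hmE μ]
    exact csInf_le (hEbdd μ) (hE1 μ hμ)
  -- monotonicity of m
  have hmono : ∀ a b : ℝ, 0 ≤ a → a ≤ b → m a ≤ m b := by
    intro a b ha hab
    have hsub : E b ⊆ E a := by
      intro u hu
      refine ⟨hu.1, ?_⟩
      have hc1u : 0 ≤ c1 u := hc1_nonneg u hu.1
      nlinarith [hu.2]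
    rw [hmE a, hmE b]
    exact csInf_le_csInf (hEbdd a) (hEne b (le_trans ha hab)) hsub
  -- one-sided Lipschitz bound
  have hkey : ∀ a b : ℝ, 0 ≤ a → a ≤ b → m b ≤ m a + C * κ * (b - a) := by
    intro a b ha hab
    rcases eq_or_lt_of_le hab with rfl | hlt
    · simp
    have hb0 : 0 ≤ b := le_trans ha hab
    have hδ : 0 < C * κ * (b - a) := mul_pos (mul_pos hC hκ) (by linarith)
    set w : ℝ := m a + C * κ * (b - a) with hwdef
    rcases le_or_gt 1 w with hw1 | hw1
    · exact le_trans (hm1 b hb0) hw1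
    -- show w ∈ E b
    have hw0 : 0 ≤ w := le_trans (hm0 a ha) (by linarith)
    have hwIcc : w ∈ Icc (0:ℝ) 1 := ⟨hw0, hw1.le⟩
    have hwin : c1 w * b + c2 w ≤ Ginv w := by
      refine le_of_forall_pos_le_add ?_
      intro η hη
      set ε : ℝ := min (η * κ) (C * κ * (b - a)) with hεdef
      have hε : 0 < ε := lt_min (by positivity) hδ
      have hlt2 : sInf (E a) < sInf (E a) + ε := by linarith
      obtain ⟨u, huE, hult⟩ := exists_lt_of_csInf_lt (hEne a ha) hlt2
      rw [← hmE a] at hult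
      have huIcc : u ∈ Icc (0:ℝ) 1 := huE.1
      have hmau : m a ≤ u := by
        rw [hmE a]; exact csInf_le (hEbdd a) huE
      have huw : u ≤ w := by
        have : ε ≤ C * κ * (b - a) := min_le_right _ _
        linarith
      -- compare the cost sides
      have hc1w : c1 w ≤ c1 u := by
        rcases eq_or_lt_of_le huw with rfl | h
        · exact le_refl _
        · exact (hc1_anti huIcc hwIcc h).le
      have hc2w : c2 w ≤ c2 u := hc2_anti huIcc hwIcc huw
      have hc1u0 : 0 ≤ c1 u := hc1_nonneg u huIcc
      have hc1uC : c1 u ≤ C := hc1_bdd u huIcc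
      -- Ginv side
      have hgr := hgrowth u w huIcc.1 huw hw1.le
      have hwu : C * κ * (b - a) - ε ≤ w - u := by linarith
      have hdiv : C * (b - a) - η ≤ (w - u) / κ := by
        rw [le_div_iff₀ hκ]
        have hεη : ε ≤ η * κ := min_le_left _ _
        nlinarith
      have hchain : c1 w * b + c2 w ≤ Ginv u + C * (b - a) := by
        have h1 : c1 w * b + c2 w ≤ c1 u * b + c2 u := by
          have := mul_le_mul_of_nonneg_right hc1w hb0
          linarith
        have h2 : c1 u * b + c2 u = c1 u * a + c2 u + c1 u * (b - a) := by ring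
        have h3 : c1 u * (b - a) ≤ C * (b - a) :=
          mul_le_mul_of_nonneg_right hc1uC (by linarith)
        have h4 := huE.2
        linarith
      linarith
    have : w ∈ E b := ⟨hwIcc, hwin⟩
    rw [hmE b]
    exact csInf_le (hEbdd b) this
  -- conclude
  intro μ₁ hμ₁ μ₂ hμ₂
  simp only [mem_Ici] at hμ₁ hμ₂
  rcases le_total μ₁ μ₂ with h | h
  · rw [abs_of_nonneg (by linarith [hmono μ₁ μ₂ hμ₁ h] : (0:ℝ) ≤ m μ₂ - m μ₁),
      abs_of_nonneg (by linarith : (0:ℝ) ≤ μ₂ - μ₁)]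
    linarith [hkey μ₁ μ₂ hμ₁ h]
  · rw [abs_of_nonpos (by linarith [hmono μ₂ μ₁ hμ₂ h] : m μ₂ - m μ₁ ≤ 0),
      abs_of_nonpos (by linarith : μ₂ - μ₁ ≤ 0)]
    linarith [hkey μ₂ μ₁ hμ₂ h]
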